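/- Let β ∈ (0,1) satisfy sin(2πβ) − sin(πβ) = βπ·cos(πβ), and define Γ : [0,1] → [0,1] by Γ(x) = β − x for x ∈ [0,β) and Γ(x) = x for x ∈ [β,1]. Then the pushforward π* of Lebesgue measure on [0,1] under x ↦ (x, Γ(x)) is a doubly stochastic measure on [0,1]², and for every doubly stochastic measure π on [0,1]², ∫ sin(π(x+y)) dπ(x,y) ≤ ∫ sin(π(x+y)) dπ*(x,y) = ∫₀¹ sin(π(x + Γ(x))) dx. -/

import Mathlib

open MeasureTheory Set Real
set_option linter.unusedVariables false
set_option linter.unusedSectionVars false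
set_option maxHeartbeats 1000000

/-- A doubly stochastic measure on `[0,1]²`. -/
def IsDoublyStochastic (μ : Measure (ℝ × ℝ)) : Prop :=
  IsProbabilityMeasure μ ∧
  (∀ B : Set ℝ, MeasurableSet B → B ⊆ Icc 0 1 → μ (B ×ˢ Icc (0:ℝ) 1) = volume B) ∧
  (∀ B : Set ℝ, MeasurableSet B → B ⊆ Icc 0 1 → μ (Icc (0:ℝ) 1 ×ˢ B) = volume B)


noncomputable def Hfun (β : ℝ) : ℝ → ℝ := fun s => π * Real.cos (π * β) * s - Real.sin (π * s)

lemma Hfun_hasDerivAt (β s : ℝ) :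
    HasDerivAt (Hfun β) (π * Real.cos (π * β) - Real.cos (π * s) * π) s := by
  have h1 : HasDerivAt (fun s : ℝ => π * Real.cos (π * β) * s) (π * Real.cos (π * β)) s := by
    simpa using (hasDerivAt_id s).const_mul (π * Real.cos (π * β))
  have h2 : HasDerivAt (fun s : ℝ => Real.sin (π * s)) (Real.cos (π * s) * π) s := by
    have := (Real.hasDerivAt_sin (π * s)).comp s (by simpa using (hasDerivAt_id s).const_mul π)
    exact this
  exact h1.sub h2

lemma Hfun_cont (β : ℝ) : Continuous (Hfun β) := by
  unfold Hfun; continuity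

-- cos comparison helpers
lemma cos_ge_of_le (β : ℝ) (hβ1 : β ≤ 1) {s : ℝ} (h0 : 0 ≤ s) (hs : s ≤ β) :
    Real.cos (π * β) ≤ Real.cos (π * s) := by
  have hπ := Real.pi_pos
  apply Real.cos_le_cos_of_nonneg_of_le_pi (by positivity) (by nlinarith) (by nlinarith)

lemma cos_ge_of_ge (β : ℝ) (hβ1 : β ≤ 1) {s : ℝ} (h0 : 2 - β ≤ s) (hs : s ≤ 2) :
    Real.cos (π * β) ≤ Real.cos (π * s) := by
  have hπ := Real.pi_pos
  have h : Real.cos (π * s) = Real.cos (π * (2 - s)) := by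
    rw [show π * (2 - s) = 2 * π - π * s by ring, Real.cos_two_pi_sub]
  rw [h]
  exact cos_ge_of_le β hβ1 (by nlinarith) (by nlinarith)

lemma cos_le_mid (β : ℝ) (hβ0 : 0 ≤ β) (hβ1 : β ≤ 1) {s : ℝ} (h0 : β ≤ s) (hs : s ≤ 2 - β) :
    Real.cos (π * s) ≤ Real.cos (π * β) := by
  have hπ := Real.pi_pos
  rcases le_or_gt s 1 with h | h
  · exact Real.cos_le_cos_of_nonneg_of_le_pi (by positivity) (by nlinarith) (by nlinarith)
  · have heq : Real.cos (π * s) = Real.cos (π * (2 - s)) := by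
      rw [show π * (2 - s) = 2 * π - π * s by ring, Real.cos_two_pi_sub]
    rw [heq]
    exact Real.cos_le_cos_of_nonneg_of_le_pi (by positivity) (by nlinarith) (by nlinarith)

lemma cos_lt_mid (β : ℝ) (hβ0 : 0 ≤ β) (hβ1 : β < 1) {s : ℝ} (h0 : β < s) (hs : s < 2 - β) :
    Real.cos (π * s) < Real.cos (π * β) := by
  have hπ := Real.pi_pos
  rcases le_or_gt s 1 with h | h
  · exact Real.cos_lt_cos_of_nonneg_of_le_pi (by positivity) (by nlinarith) (by nlinarith)
  · have heq : Real.cos (π * s) = Real.cos (π * (2 - s)) := by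
      rw [show π * (2 - s) = 2 * π - π * s by ring, Real.cos_two_pi_sub]
    rw [heq]
    exact Real.cos_lt_cos_of_nonneg_of_le_pi (by positivity) (by nlinarith) (by nlinarith)

lemma Hfun_anti1 (β : ℝ) (hβ1 : β ≤ 1) : AntitoneOn (Hfun β) (Icc 0 β) := by
  apply antitoneOn_of_deriv_nonpos (convex_Icc 0 β) (Hfun_cont β).continuousOn
    (fun s _ => ((Hfun_hasDerivAt β s).differentiableAt).differentiableWithinAt)
  intro s hs
  rw [interior_Icc] at hs
  rw [(Hfun_hasDerivAt β s).deriv]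
  have := cos_ge_of_le β hβ1 hs.1.le hs.2.le
  nlinarith [Real.pi_pos]

lemma Hfun_mono (β : ℝ) (hβ0 : 0 ≤ β) (hβ1 : β ≤ 1) : MonotoneOn (Hfun β) (Icc β (2 - β)) := by
  apply monotoneOn_of_deriv_nonneg (convex_Icc β (2 - β)) (Hfun_cont β).continuousOn
    (fun s _ => ((Hfun_hasDerivAt β s).differentiableAt).differentiableWithinAt)
  intro s hs
  rw [interior_Icc] at hs
  rw [(Hfun_hasDerivAt β s).deriv]
  have := cos_le_mid β hβ0 hβ1 hs.1.le hs.2.le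
  nlinarith [Real.pi_pos]

lemma Hfun_anti2 (β : ℝ) (hβ1 : β ≤ 1) : AntitoneOn (Hfun β) (Icc (2 - β) 2) := by
  apply antitoneOn_of_deriv_nonpos (convex_Icc (2 - β) 2) (Hfun_cont β).continuousOn
    (fun s _ => ((Hfun_hasDerivAt β s).differentiableAt).differentiableWithinAt)
  intro s hs
  rw [interior_Icc] at hs
  rw [(Hfun_hasDerivAt β s).deriv]
  have := cos_ge_of_ge β hβ1 hs.1.le hs.2.le
  nlinarith [Real.pi_pos]

lemma Hfun_smono (β : ℝ) (hβ0 : 0 ≤ β) (hβ1 : β < 1) : StrictMonoOn (Hfun β) (Icc β (2 - β)) := by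
  apply strictMonoOn_of_deriv_pos (convex_Icc β (2 - β)) (Hfun_cont β).continuousOn
  intro s hs
  rw [interior_Icc] at hs
  rw [(Hfun_hasDerivAt β s).deriv]
  have := cos_lt_mid β hβ0 hβ1 hs.1 hs.2
  nlinarith [Real.pi_pos]



section
variable (β : ℝ) (hβ : β ∈ Ioo (0:ℝ) 1)
  (hβeq : Real.sin (2 * π * β) - Real.sin (π * β) = β * π * Real.cos (π * β))
include hβ hβeq

lemma Hfun_eq_ends : Hfun β (2 * β) = Hfun β β := by
  unfold Hfun
  rw [show π * (2 * β) = 2 * π * β by ring]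
  nlinarith [hβeq]

lemma beta_gt (hS : StrictMonoOn (Hfun β) (Icc β (2 - β))) : 2/3 < β := by
  by_contra h
  push_neg at h
  have h1 : Hfun β β < Hfun β (2 * β) := by
    apply hS ⟨le_refl _, by linarith⟩ ⟨by linarith [hβ.1], by linarith⟩ (by linarith [hβ.1])
  have := Hfun_eq_ends β hβ hβeq
  linarith
end

-- case aa pointwise lemma
lemma aux_aa (x y : ℝ) (h1 : 1 ≤ x + y) (h2 : x + y ≤ 2) :
    Real.sin (π * (x + y)) ≤ Real.sin (2 * π * x) / 2 + Real.sin (2 * π * y) / 2 := by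
  have hπ := Real.pi_pos
  have hsum : Real.sin (2 * π * x) / 2 + Real.sin (2 * π * y) / 2
      = Real.sin (π * (x + y)) * Real.cos (π * (x - y)) := by
    have := Real.sin_sub_sin (2 * π * x) (-(2 * π * y))
    rw [Real.sin_neg, sub_neg_eq_add] at this
    have e1 : (2 * π * x - -(2 * π * y)) / 2 = π * (x + y) := by ring
    have e2 : (2 * π * x + -(2 * π * y)) / 2 = π * (x - y) := by ring
    rw [e1, e2] at this
    linarith
  rw [hsum]
  have hs : Real.sin (π * (x + y)) ≤ 0 := by
    have : Real.sin (π * (x + y)) = - Real.sin (π * (x + y) - π) := by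
      rw [Real.sin_sub_pi]; ring
    rw [this]
    have : 0 ≤ Real.sin (π * (x + y) - π) :=
      Real.sin_nonneg_of_nonneg_of_le_pi (by nlinarith) (by nlinarith)
    linarith
  nlinarith [Real.cos_le_one (π * (x - y))]

-- the k lemma
lemma Kmono : MonotoneOn (fun y => Real.sin (2 * π * y) - 2 * Real.sin (π * y)) (Icc (2/3 : ℝ) 1) := by
  have hd : ∀ y : ℝ, HasDerivAt (fun y => Real.sin (2 * π * y) - 2 * Real.sin (π * y))
      (Real.cos (2 * π * y) * (2 * π) - 2 * (Real.cos (π * y) * π)) y := by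
    intro y
    have h1 : HasDerivAt (fun y : ℝ => Real.sin (2 * π * y)) (Real.cos (2 * π * y) * (2 * π)) y := by
      have := (Real.hasDerivAt_sin (2 * π * y)).comp y (by simpa using (hasDerivAt_id y).const_mul (2 * π))
      exact this
    have h2 : HasDerivAt (fun y : ℝ => Real.sin (π * y)) (Real.cos (π * y) * π) y := by
      have := (Real.hasDerivAt_sin (π * y)).comp y (by simpa using (hasDerivAt_id y).const_mul π)
      exact this
    exact h1.sub (h2.const_mul 2)
  apply monotoneOn_of_deriv_nonneg (convex_Icc _ _)
    (by continuity : Continuous fun y => Real.sin (2 * π * y) - 2 * Real.sin (π * y)).continuousOn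
    (fun y _ => (hd y).differentiableAt.differentiableWithinAt)
  intro y hy
  rw [interior_Icc] at hy
  rw [(hd y).deriv]
  have hπ := Real.pi_pos
  have hc : Real.cos (π * y) < -(1/2) := by
    have h23 : Real.cos (π * (2/3)) = -(1/2) := by
      rw [show π * (2/3) = π - π/3 by ring, Real.cos_pi_sub, Real.cos_pi_div_three]
    rw [← h23]
    exact Real.cos_lt_cos_of_nonneg_of_le_pi (by positivity) (by nlinarith [hy.2]) (by nlinarith [hy.1])
  have hdouble : Real.cos (2 * π * y) = 2 * Real.cos (π * y) ^ 2 - 1 := by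
    rw [show 2 * π * y = 2 * (π * y) by ring, Real.cos_two_mul]
  rw [hdouble]
  have hc1 : -1 ≤ Real.cos (π * y) := Real.neg_one_le_cos _
  have hprod : (0:ℝ) ≤ -(2 * Real.cos (π * y) + 1) * (1 - Real.cos (π * y)) :=
    mul_nonneg (by linarith) (by linarith)
  nlinarith [mul_nonneg hπ.le hprod]

noncomputable def phiD (β : ℝ) : ℝ → ℝ := fun x =>
  if x < β then π * Real.cos (π * β) * x + (Real.sin (π * β) - β * π * Real.cos (π * β)) / 2
  else Real.sin (2 * π * x) / 2

section
variable {β : ℝ} (hβ : β ∈ Ioo (0:ℝ) 1)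
  (hβeq : Real.sin (2 * π * β) - Real.sin (π * β) = β * π * Real.cos (π * β))
  (hβ23 : 2/3 < β)
include hβ hβeq hβ23

lemma phi_add_mix {x y : ℝ} (hx0 : 0 ≤ x) (hxβ : x < β) (hyβ : β ≤ y) (hy1 : y ≤ 1) :
    Real.sin (π * (x + y)) ≤ phiD β x + phiD β y := by
  have hβ1 := hβ.2
  have hβ0 := hβ.1
  rw [phiD, if_pos hxβ, phiD, if_neg (not_lt.mpr hyβ)]
  set c0 := Real.cos (π * β) with hc0
  have idβ : π * c0 * β + (Real.sin (π * β) - β * π * c0) / 2 = Real.sin (2 * π * β) / 2 := by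
    rw [hc0]; linarith [hβeq]
  have hk : 0 ≤ (Real.sin (π * β) - β * π * c0) / 2 + Real.sin (2 * π * y) / 2
      - Real.sin (π * y) := by
    have h1 := Kmono ⟨hβ23.le, hβ1.le⟩ ⟨by linarith, hy1⟩ hyβ
    simp only at h1
    rw [hc0]; linarith [hβeq]
  rcases le_or_gt (x + y) (2 - β) with hc | hc
  · have key : Hfun β y ≤ Hfun β (x + y) :=
      Hfun_mono β hβ0.le hβ1.le ⟨hyβ, by linarith⟩ ⟨by linarith, hc⟩ (by linarith)
    unfold Hfun at key
    rw [← hc0] at key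
    have : Real.sin (π * (x + y)) ≤ π * c0 * x + Real.sin (π * y) := by nlinarith [key]
    linarith
  · have hβy : Real.sin (π * (β + y)) ≤ Real.sin (2 * π * β) / 2 + Real.sin (2 * π * y) / 2 :=
      aux_aa β y (by linarith) (by linarith)
    have key : Hfun β (β + y) ≤ Hfun β (x + y) :=
      Hfun_anti2 β hβ1.le ⟨hc.le, by linarith⟩ ⟨by linarith, by linarith⟩ (by linarith)
    unfold Hfun at key
    rw [← hc0] at key
    nlinarith [key]

lemma phi_add {x y : ℝ} (hx : x ∈ Icc (0:ℝ) 1) (hy : y ∈ Icc (0:ℝ) 1) :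
    Real.sin (π * (x + y)) ≤ phiD β x + phiD β y := by
  rcases lt_or_ge x β with hxβ | hxβ <;> rcases lt_or_ge y β with hyβ | hyβ
  · -- both below β
    have hβ1 := hβ.2
    have hβ0 := hβ.1
    simp only [phiD]
    rw [if_pos hxβ, if_pos hyβ]
    set c0 := Real.cos (π * β) with hc0
    have key : Hfun β β ≤ Hfun β (x + y) := by
      rcases le_or_gt (x + y) β with h | h
      · exact Hfun_anti1 β hβ1.le ⟨by linarith [hx.1, hy.1], h⟩ ⟨by linarith [hx.1, hy.1], le_refl β⟩ h
      rcases le_or_gt (x + y) (2 - β) with h2 | h2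
      · exact Hfun_mono β hβ0.le hβ1.le ⟨le_refl β, by linarith⟩ ⟨h.le, h2⟩ h.le
      · have := Hfun_anti2 β hβ1.le ⟨h2.le, by linarith⟩ ⟨by linarith, by linarith⟩
          (by linarith : x + y ≤ 2 * β)
        rw [Hfun_eq_ends β hβ hβeq] at this
        exact this
    unfold Hfun at key
    rw [← hc0] at key
    nlinarith [key]
  · exact phi_add_mix hβ hβeq hβ23 hx.1 hxβ hyβ hy.2
  · have := phi_add_mix hβ hβeq hβ23 hy.1 hyβ hxβ hx.2
    rw [add_comm y x] at this
    linarith [this]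
  · simp only [phiD]
    rw [if_neg (not_lt.mpr hxβ), if_neg (not_lt.mpr hyβ)]
    exact aux_aa x y (by linarith) (by linarith [hx.2, hy.2])

lemma phi_eq {x : ℝ} (hx : x ∈ Icc (0:ℝ) 1) :
    phiD β x + phiD β (if x < β then β - x else x)
      = Real.sin (π * (x + (if x < β then β - x else x))) := by
  have hβ1 := hβ.2
  have hβ0 := hβ.1
  rcases lt_or_ge x β with hxβ | hxβ
  · rw [if_pos hxβ]
    have hsum : x + (β - x) = β := by ring
    rw [hsum, phiD, if_pos hxβ]
    rcases eq_or_lt_of_le hx.1 with h0 | h0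
    · rw [← h0, phiD, if_neg (by simp : ¬ (β - 0 < β))]
      simp only [mul_zero, zero_add, sub_zero]
      linarith [hβeq]
    · rw [phiD, if_pos (by linarith : β - x < β)]
      ring_nf
  · rw [if_neg (not_lt.mpr hxβ), phiD, if_neg (not_lt.mpr hxβ)]
    rw [show π * (x + x) = 2 * π * x by ring]
    ring
end



lemma phiD_meas (β : ℝ) : Measurable (phiD β) := by
  unfold phiD
  apply Measurable.ite measurableSet_Iio
  · exact (measurable_id.const_mul _).add_const _
  · exact (Real.measurable_sin.comp (measurable_id.const_mul (2 * π))).div_const 2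

lemma phiD_bound (β : ℝ) (hβ : β ∈ Ioo (0:ℝ) 1) {x : ℝ} (hx : x ∈ Icc (0:ℝ) 1) :
    ‖phiD β x‖ ≤ 2 * π + 1 := by
  have hπ := Real.pi_pos
  have hc1 : -1 ≤ Real.cos (π * β) := Real.neg_one_le_cos _
  have hc2 : Real.cos (π * β) ≤ 1 := Real.cos_le_one _
  have hs1 : -1 ≤ Real.sin (π * β) := Real.neg_one_le_sin _
  have hs2 : Real.sin (π * β) ≤ 1 := Real.sin_le_one _
  have hs3 : -1 ≤ Real.sin (2 * π * x) := Real.neg_one_le_sin _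
  have hs4 : Real.sin (2 * π * x) ≤ 1 := Real.sin_le_one _
  rw [Real.norm_eq_abs, abs_le]
  unfold phiD
  split_ifs with h
  · constructor <;>
      nlinarith [hx.1, hx.2, hβ.1, hβ.2, mul_nonneg hx.1 (by linarith : (0:ℝ) ≤ 1 - Real.cos (π * β)),
        mul_nonneg hx.1 (by linarith : (0:ℝ) ≤ Real.cos (π * β) + 1),
        mul_nonneg hβ.1.le (by linarith : (0:ℝ) ≤ 1 - Real.cos (π * β)),
        mul_nonneg hβ.1.le (by linarith : (0:ℝ) ≤ Real.cos (π * β) + 1)]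
  · constructor <;> nlinarith

lemma phiD_integrable (β : ℝ) (hβ : β ∈ Ioo (0:ℝ) 1) :
    Integrable (phiD β) (volume.restrict (Icc (0:ℝ) 1)) := by
  apply Integrable.mono' (integrable_const (2 * π + 1)) (phiD_meas β).aestronglyMeasurable
  filter_upwards [ae_restrict_mem measurableSet_Icc] with x hx
  exact phiD_bound β hβ hx

noncomputable def Gmap (β : ℝ) : ℝ → ℝ := fun x => if x < β then β - x else x

lemma Gmap_meas (β : ℝ) : Measurable (Gmap β) := by
  unfold Gmap
  exact Measurable.ite measurableSet_Iio (measurable_const.sub measurable_id) measurable_id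

lemma Gmap_mem (β : ℝ) (hβ : β ∈ Ioo (0:ℝ) 1) {x : ℝ} (hx : x ∈ Icc (0:ℝ) 1) :
    Gmap β x ∈ Icc (0:ℝ) 1 := by
  unfold Gmap
  split_ifs with h
  · exact ⟨by linarith [hx.1], by linarith [hx.1, hβ.2]⟩
  · exact hx

lemma mapG (β : ℝ) (hβ : β ∈ Ioo (0:ℝ) 1) :
    Measure.map (Gmap β) (volume.restrict (Icc (0:ℝ) 1)) = volume.restrict (Icc (0:ℝ) 1) := by
  have hβ0 := hβ.1; have hβ1 := hβ.2
  ext B hB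
  rw [Measure.map_apply (Gmap_meas β) hB, Measure.restrict_apply hB,
    Measure.restrict_apply (Gmap_meas β hB)]
  have hsplit : Gmap β ⁻¹' B ∩ Icc 0 1
      = ((fun x => β - x) ⁻¹' (B ∩ Ioc 0 β)) ∪ (B ∩ Icc β 1) := by
    ext x
    simp only [Gmap, mem_inter_iff, mem_preimage, mem_union, mem_Icc, mem_Ioc]
    constructor
    · rintro ⟨hGB, hx0, hx1⟩
      by_cases h : x < β
      · rw [if_pos h] at hGB
        exact Or.inl ⟨hGB, by linarith, by linarith⟩
      · rw [if_neg h] at hGB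
        exact Or.inr ⟨hGB, ⟨not_lt.mp h, hx1⟩⟩
    · rintro (⟨hGB, h1, h2⟩ | ⟨hxB, h1, h2⟩)
      · have h : x < β := by linarith
        rw [if_pos h]
        exact ⟨hGB, by linarith, by linarith⟩
      · rw [if_neg (not_lt.mpr h1)]
        exact ⟨hxB, by linarith, h2⟩
  rw [hsplit]
  have hd : Disjoint ((fun x => β - x) ⁻¹' (B ∩ Ioc 0 β)) (B ∩ Icc β 1) := by
    apply Set.disjoint_left.mpr
    rintro x ⟨-, h1, h2⟩ ⟨-, h3, -⟩
    dsimp only at h1 h2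
    linarith
  rw [measure_union hd (hB.inter measurableSet_Icc)]
  have hpre : volume ((fun x => β - x) ⁻¹' (B ∩ Ioc 0 β)) = volume (B ∩ Ioc 0 β) :=
    (Measure.measurePreserving_sub_left volume β).measure_preimage
      (hB.inter measurableSet_Ioc).nullMeasurableSet
  rw [hpre]
  have h1 : volume (B ∩ Icc β 1) = volume (B ∩ Ioc β 1) :=
    (measure_congr (ae_eq_set_inter (ae_eq_refl B) (Ioc_ae_eq_Icc (μ := volume) (a := β) (b := 1)))).symm
  have h2 : volume (B ∩ Icc 0 1) = volume (B ∩ Ioc 0 1) :=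
    (measure_congr (ae_eq_set_inter (ae_eq_refl B) (Ioc_ae_eq_Icc (μ := volume) (a := 0) (b := 1)))).symm
  rw [h1, h2, ← measure_union ?_ (hB.inter measurableSet_Ioc), ← inter_union_distrib_left,
    Ioc_union_Ioc_eq_Ioc hβ0.le hβ1.le]
  · apply Set.disjoint_left.mpr
    rintro x ⟨-, -, h2⟩ ⟨-, h3, -⟩
    linarith
lemma DS_conull (μ : Measure (ℝ × ℝ)) (h : IsDoublyStochastic μ) :
    μ ((Icc (0:ℝ) 1 ×ˢ Icc (0:ℝ) 1)ᶜ) = 0 := by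
  obtain ⟨hp, h1, h2⟩ := h
  have hII : μ (Icc (0:ℝ) 1 ×ˢ Icc (0:ℝ) 1) = 1 := by
    rw [h1 (Icc 0 1) measurableSet_Icc subset_rfl, Real.volume_Icc]
    norm_num
  haveI := hp
  rw [measure_compl (measurableSet_Icc.prod measurableSet_Icc) (measure_ne_top μ _), hII,
    measure_univ]
  simp

lemma marg_fst (μ : Measure (ℝ × ℝ)) (h : IsDoublyStochastic μ) :
    μ.map Prod.fst = volume.restrict (Icc (0:ℝ) 1) := by
  have hcompl := DS_conull μ h
  obtain ⟨hp, h1, h2⟩ := h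
  ext B hB
  rw [Measure.map_apply measurable_fst hB, Measure.restrict_apply hB]
  have hpre : Prod.fst ⁻¹' B = B ×ˢ (univ : Set ℝ) := by
    ext p; simp
  rw [hpre, ← measure_inter_conull hcompl]
  have heq : (B ×ˢ (univ : Set ℝ)) ∩ (Icc (0:ℝ) 1 ×ˢ Icc (0:ℝ) 1)
      = (B ∩ Icc 0 1) ×ˢ Icc (0:ℝ) 1 := by
    ext p; simp only [mem_inter_iff, Set.mem_prod, mem_univ, and_true]; tauto
  rw [heq, h1 _ (hB.inter measurableSet_Icc) inter_subset_right]

lemma marg_snd (μ : Measure (ℝ × ℝ)) (h : IsDoublyStochastic μ) :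
    μ.map Prod.snd = volume.restrict (Icc (0:ℝ) 1) := by
  have hcompl := DS_conull μ h
  obtain ⟨hp, h1, h2⟩ := h
  ext B hB
  rw [Measure.map_apply measurable_snd hB, Measure.restrict_apply hB]
  have hpre : Prod.snd ⁻¹' B = (univ : Set ℝ) ×ˢ B := by
    ext p; simp
  rw [hpre, ← measure_inter_conull hcompl]
  have heq : ((univ : Set ℝ) ×ˢ B) ∩ (Icc (0:ℝ) 1 ×ˢ Icc (0:ℝ) 1)
      = Icc (0:ℝ) 1 ×ˢ (B ∩ Icc 0 1) := by
    ext p; simp only [mem_inter_iff, Set.mem_prod, mem_univ, true_and]; tauto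
  rw [heq, h2 _ (hB.inter measurableSet_Icc) inter_subset_right]

theorem stmt18 (β : ℝ) (hβ : β ∈ Ioo (0:ℝ) 1)
    (hβeq : Real.sin (2 * π * β) - Real.sin (π * β) = β * π * Real.cos (π * β))
    (Γ : ℝ → ℝ)
    (hΓ1 : ∀ x, 0 ≤ x → x < β → Γ x = β - x)
    (hΓ2 : ∀ x, β ≤ x → x ≤ 1 → Γ x = x) :
    IsDoublyStochastic
      (Measure.map (fun x => (x, Γ x)) (volume.restrict (Icc (0:ℝ) 1))) ∧
    (∀ μ : Measure (ℝ × ℝ), IsDoublyStochastic μ →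
      ∫ p, Real.sin (π * (p.1 + p.2)) ∂μ ≤
        ∫ p, Real.sin (π * (p.1 + p.2))
          ∂(Measure.map (fun x => (x, Γ x)) (volume.restrict (Icc (0:ℝ) 1)))) ∧
    ∫ p, Real.sin (π * (p.1 + p.2))
        ∂(Measure.map (fun x => (x, Γ x)) (volume.restrict (Icc (0:ℝ) 1))) =
      ∫ x in (0:ℝ)..1, Real.sin (π * (x + Γ x)) := by
  have hβ23 : 2/3 < β := beta_gt β hβ hβeq (Hfun_smono β hβ.1.le hβ.2)
  set I : Set ℝ := Icc (0:ℝ) 1 with hI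
  set ν : Measure ℝ := volume.restrict I with hν
  haveI hν1 : IsProbabilityMeasure ν := ⟨by
    rw [hν, Measure.restrict_apply_univ, hI, Real.volume_Icc]; norm_num⟩
  have hT : Measurable (fun x : ℝ => (x, Gmap β x)) := measurable_id.prodMk (Gmap_meas β)
  have hcongr : Measure.map (fun x => (x, Γ x)) ν = Measure.map (fun x => (x, Gmap β x)) ν := by
    apply Measure.map_congr
    filter_upwards [ae_restrict_mem measurableSet_Icc] with x hx
    have hG : Γ x = Gmap β x := by
      unfold Gmap
      split_ifs with h
      · exact hΓ1 x hx.1 h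
      · exact hΓ2 x (not_lt.mp h) hx.2
    rw [hG]
  set μstar := Measure.map (fun x : ℝ => (x, Gmap β x)) ν with hμstar
  have hcont : Continuous (fun p : ℝ × ℝ => Real.sin (π * (p.1 + p.2))) := by fun_prop
  -- Part 1 : doubly stochastic
  have part1 : IsDoublyStochastic μstar := by
    refine ⟨Measure.isProbabilityMeasure_map hT.aemeasurable, ?_, ?_⟩
    · intro B hBm hBsub
      rw [hμstar, Measure.map_apply hT (hBm.prod measurableSet_Icc), hν,
        Measure.restrict_apply (hT (hBm.prod measurableSet_Icc))]
      have hset : (fun x : ℝ => (x, Gmap β x)) ⁻¹' (B ×ˢ I) ∩ I = B := by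
        ext x
        simp only [mem_inter_iff, mem_preimage, Set.mem_prod]
        constructor
        · rintro ⟨⟨h1, -⟩, -⟩; exact h1
        · intro hxB
          have hxI := hBsub hxB
          exact ⟨⟨hxB, Gmap_mem β hβ hxI⟩, hxI⟩
      rw [hset]
    · intro B hBm hBsub
      rw [hμstar, Measure.map_apply hT (measurableSet_Icc.prod hBm), hν,
        Measure.restrict_apply (hT (measurableSet_Icc.prod hBm))]
      have hset : (fun x : ℝ => (x, Gmap β x)) ⁻¹' (I ×ˢ B) ∩ I = Gmap β ⁻¹' B ∩ I := by
        ext x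
        simp only [mem_inter_iff, mem_preimage, Set.mem_prod]
        constructor
        · rintro ⟨⟨-, h2⟩, h3⟩; exact ⟨h2, h3⟩
        · rintro ⟨h2, h3⟩; exact ⟨⟨h3, h2⟩, h3⟩
      rw [hset]
      have hcomp : volume (Gmap β ⁻¹' B ∩ I) = (Measure.map (Gmap β) ν) B := by
        rw [Measure.map_apply (Gmap_meas β) hBm, hν,
          Measure.restrict_apply (Gmap_meas β hBm)]
      rw [hcomp, mapG β hβ, Measure.restrict_apply hBm, inter_eq_self_of_subset_left hBsub]
  -- the integral over μstar
  have hint_star : ∫ p, Real.sin (π * (p.1 + p.2)) ∂μstar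
      = ∫ x, Real.sin (π * (x + Gmap β x)) ∂ν := by
    rw [hμstar, integral_map hT.aemeasurable hcont.aestronglyMeasurable]
  -- Part 3 : equality with the interval integral
  have part3 : ∫ p, Real.sin (π * (p.1 + p.2)) ∂μstar
      = ∫ x in (0:ℝ)..1, Real.sin (π * (x + Γ x)) := by
    rw [hint_star, intervalIntegral.integral_of_le zero_le_one, hν, hI,
      integral_Icc_eq_integral_Ioc]
    apply integral_congr_ae
    filter_upwards [ae_restrict_mem measurableSet_Ioc] with x hx
    have hG : Γ x = Gmap β x := by
      unfold Gmap
      split_ifs with h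
      · exact hΓ1 x hx.1.le h
      · exact hΓ2 x (not_lt.mp h) hx.2
    rw [hG]
  -- value of the dual potential
  have hφint : Integrable (phiD β) ν := phiD_integrable β hβ
  have hφG_int : Integrable (fun x => phiD β (Gmap β x)) ν := by
    have h1 : Integrable (phiD β) (Measure.map (Gmap β) ν) := by
      rw [mapG β hβ]; exact hφint
    exact (integrable_map_measure
      ((phiD_meas β).aestronglyMeasurable) (Gmap_meas β).aemeasurable).mp h1
  have hstar_val : ∫ p, Real.sin (π * (p.1 + p.2)) ∂μstar
      = 2 * ∫ x, phiD β x ∂ν := by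
    rw [hint_star]
    have h1 : ∫ x, Real.sin (π * (x + Gmap β x)) ∂ν
        = ∫ x, (phiD β x + phiD β (Gmap β x)) ∂ν := by
      apply integral_congr_ae
      filter_upwards [ae_restrict_mem measurableSet_Icc] with x hx
      exact (phi_eq hβ hβeq hβ23 hx).symm
    rw [h1, integral_add hφint hφG_int]
    have h2 : ∫ x, phiD β (Gmap β x) ∂ν = ∫ x, phiD β x ∂ν := by
      rw [← integral_map (Gmap_meas β).aemeasurable
        (by rw [mapG β hβ]; exact (phiD_meas β).aestronglyMeasurable), mapG β hβ]
    rw [h2]; ring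
  refine ⟨by rw [hcongr]; exact part1, ?_, by rw [hcongr]; exact part3⟩
  -- Part 2 : optimality
  intro μ hμ
  rw [hcongr]
  haveI := hμ.1
  have hfst : μ.map Prod.fst = ν := marg_fst μ hμ
  have hsnd : μ.map Prod.snd = ν := marg_snd μ hμ
  have hint1 : Integrable (fun p : ℝ × ℝ => phiD β p.1) μ := by
    have h1 : Integrable (phiD β) (μ.map Prod.fst) := by rw [hfst]; exact hφint
    exact (integrable_map_measure
      (by rw [hfst]; exact (phiD_meas β).aestronglyMeasurable)
      measurable_fst.aemeasurable).mp h1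
  have hint2 : Integrable (fun p : ℝ × ℝ => phiD β p.2) μ := by
    have h1 : Integrable (phiD β) (μ.map Prod.snd) := by rw [hsnd]; exact hφint
    exact (integrable_map_measure
      (by rw [hsnd]; exact (phiD_meas β).aestronglyMeasurable)
      measurable_snd.aemeasurable).mp h1
  have hsin_int : Integrable (fun p : ℝ × ℝ => Real.sin (π * (p.1 + p.2))) μ := by
    apply Integrable.mono' (integrable_const 1) hcont.aestronglyMeasurable
    filter_upwards with p
    rw [Real.norm_eq_abs, abs_le]
    exact ⟨Real.neg_one_le_sin _, Real.sin_le_one _⟩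
  have hae : ∀ᵐ p ∂μ, p ∈ I ×ˢ I := by
    have h0 := DS_conull μ hμ
    rw [MeasureTheory.ae_iff]
    exact h0
  have hle : ∫ p, Real.sin (π * (p.1 + p.2)) ∂μ
      ≤ ∫ p, (phiD β p.1 + phiD β p.2) ∂μ := by
    apply integral_mono_ae hsin_int (hint1.add hint2)
    filter_upwards [hae] with p hp
    exact phi_add hβ hβeq hβ23 hp.1 hp.2
  have hval : ∫ p, (phiD β p.1 + phiD β p.2) ∂μ = 2 * ∫ x, phiD β x ∂ν := by
    rw [integral_add hint1 hint2]
    have h1 : ∫ p : ℝ × ℝ, phiD β p.1 ∂μ = ∫ x, phiD β x ∂ν := by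
      rw [← hfst, integral_map measurable_fst.aemeasurable
        (by rw [hfst]; exact (phiD_meas β).aestronglyMeasurable)]
    have h2 : ∫ p : ℝ × ℝ, phiD β p.2 ∂μ = ∫ x, phiD β x ∂ν := by
      rw [← hsnd, integral_map measurable_snd.aemeasurable
        (by rw [hsnd]; exact (phiD_meas β).aestronglyMeasurable)]
    rw [h1, h2]; ring
  calc ∫ p, Real.sin (π * (p.1 + p.2)) ∂μ
      ≤ 2 * ∫ x, phiD β x ∂ν := hle.trans (le_of_eq hval)
    _ = ∫ p, Real.sin (π * (p.1 + p.2)) ∂μstar := hstar_val.symm
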